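/- Let G = (V, E) be a graph with x ∈ ℝ^E_{>0}, and construct the capacitated graph G' on vertex set V ∪ {r, s}: each edge e of G gets capacity x(e)/2; each vertex v is joined to s by an edge of capacity 1 and to r by an edge of capacity x(δ(v))/2, where δ(v) is the set of edges incident to v. Then for any A ⊆ V with B = V∖A, the value of the cut in G' determined by A ∪ {r} equals x(E) − x(E_A) + |A|, where E_A is the set of edges with both endpoints in A. Consequently min{|A| − 1 − x(E_A) : ∅ ≠ A ⊆ V} equals (min over ∅ ≠ A ⊆ V of the cut value of A ∪ {r}) − x(E) − 1. -/
import Mathlib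


open Finset
open scoped Classical

/-- The set of edges with both endpoints in `A`. -/
noncomputable def edgesIn {V E : Type*} [Fintype E] (ends : E → Sym2 V)
    (A : Finset V) : Finset E :=
  Finset.univ.filter (fun e => ∀ v ∈ ends e, v ∈ A)

/-- The set `δ(v)` of edges incident to the vertex `v`. -/
noncomputable def delta {V E : Type*} [Fintype E] (ends : E → Sym2 V)
    (v : V) : Finset E :=
  Finset.univ.filter (fun e => v ∈ ends e)

/-- The value of the cut of the auxiliary capacitated graph `G'` determined by
`A ∪ {r}`: edges of `G` between `A` and `V∖A` have capacity `x(e)/2`, the edge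
`v–r` (for `v ∈ V∖A`) has capacity `x(δ(v))/2`, and the edge `v–s`
(for `v ∈ A`) has capacity `1`. -/
noncomputable def cutValue {V E : Type*} [Fintype V] [Fintype E] [DecidableEq V]
    (ends : E → Sym2 V) (x : E → ℝ) (A : Finset V) : ℝ :=
  (∑ e ∈ Finset.univ.filter
      (fun e => (∃ v ∈ ends e, v ∈ A) ∧ (∃ v ∈ ends e, v ∉ A)), x e / 2)
    + (∑ v ∈ Aᶜ, (∑ e ∈ delta ends v, x e) / 2)
    + (A.card : ℝ)

/-- In Cunningham's minimum-cut formulation, for every `A ⊆ V` the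
value of the cut of `G'` determined by `A ∪ {r}` equals `x(E) − x(E_A) + |A|`;
consequently `min{|A| − 1 − x(E_A) : ∅ ≠ A ⊆ V}` equals the minimum cut value
over `∅ ≠ A ⊆ V` minus `x(E) + 1`. -/
theorem stmt19 {V E : Type*} [Fintype V] [Fintype E] [DecidableEq V]
    [Nonempty V]
    (ends : E → Sym2 V)
    (hloops : ∀ e, ¬ (ends e).IsDiag)
    (x : E → ℝ) (hx : ∀ e, 0 < x e) :
    (∀ A : Finset V,
      cutValue ends x A =
        (∑ e : E, x e) - (∑ e ∈ edgesIn ends A, x e) + (A.card : ℝ)) ∧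
    sInf {q : ℝ | ∃ A : Finset V, A.Nonempty ∧
        q = (A.card : ℝ) - 1 - ∑ e ∈ edgesIn ends A, x e}
      = sInf {q : ℝ | ∃ A : Finset V, A.Nonempty ∧ q = cutValue ends x A}
        - (∑ e : E, x e) - 1 := by
  have hmain : ∀ A : Finset V, cutValue ends x A =
      (∑ e : E, x e) - (∑ e ∈ edgesIn ends A, x e) + (A.card : ℝ) := by
    intro A
    unfold cutValue
    rw [Finset.sum_filter]
    have hswap : (∑ v ∈ Aᶜ, (∑ e ∈ delta ends v, x e) / 2)
        = ∑ e : E, ((Aᶜ.filter (fun v => v ∈ ends e)).card : ℝ) * x e / 2 := by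
      rw [← Finset.sum_div,
        Finset.sum_comm' (t' := (Finset.univ : Finset E))
          (s' := fun e => Aᶜ.filter (fun v => v ∈ ends e))
          (fun v e => by simp [delta]),
        Finset.sum_div]
      refine Finset.sum_congr rfl fun e _ => ?_
      rw [Finset.sum_const, nsmul_eq_mul]
    rw [hswap]
    unfold edgesIn
    rw [Finset.sum_filter, ← Finset.sum_add_distrib, ← Finset.sum_sub_distrib]
    congr 1
    refine Finset.sum_congr rfl fun e _ => ?_
    obtain ⟨a, b, hab⟩ : ∃ a b, ends e = s(a, b) :=
      Sym2.inductionOn (f := fun p => ∃ a b, p = s(a, b)) (ends e)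
        (fun a b => ⟨a, b, rfl⟩)
    have hne : a ≠ b := by
      have := hloops e
      rw [hab, Sym2.mk_isDiag_iff] at this
      exact this
    have hC1 : ((∃ v ∈ ends e, v ∈ A) ∧ (∃ v ∈ ends e, v ∉ A))
        ↔ ((a ∈ A ∨ b ∈ A) ∧ (a ∉ A ∨ b ∉ A)) := by
      simp [hab, Sym2.mem_iff, or_comm]
    have hC2 : (∀ v ∈ ends e, v ∈ A) ↔ (a ∈ A ∧ b ∈ A) := by
      simp [hab, Sym2.mem_iff]
    have hcard : (Aᶜ.filter (fun v => v ∈ ends e)).card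
        = (if a ∈ A then 0 else 1) + (if b ∈ A then 0 else 1) := by
      have hfe : Aᶜ.filter (fun v => v ∈ ends e)
          = ({a, b} : Finset V).filter (fun v => v ∈ Aᶜ) := by
        ext v
        simp [hab, Sym2.mem_iff, and_comm]
      rw [hfe]
      by_cases ha : a ∈ A <;> by_cases hb : b ∈ A <;>
        simp [Finset.filter_insert, Finset.filter_singleton, ha, hb, hne]
    simp only [hC1, hC2, hcard]
    by_cases ha : a ∈ A <;> by_cases hb : b ∈ A <;>
      simp [ha, hb] <;> ring
  refine ⟨hmain, ?_⟩
  set S : Set ℝ := {q : ℝ | ∃ A : Finset V, A.Nonempty ∧ q = cutValue ends x A}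
    with hS
  have hSeq : {q : ℝ | ∃ A : Finset V, A.Nonempty ∧
      q = (A.card : ℝ) - 1 - ∑ e ∈ edgesIn ends A, x e}
      = (fun q => q + (-(∑ e : E, x e) - 1)) '' S := by
    ext q
    constructor
    · rintro ⟨A, hA, rfl⟩
      exact ⟨cutValue ends x A, ⟨A, hA, rfl⟩, by rw [hmain A]; ring⟩
    · rintro ⟨c, ⟨A, hA, rfl⟩, rfl⟩
      exact ⟨A, hA, by rw [hmain A]; ring⟩
  have hne : S.Nonempty := by
    obtain ⟨v⟩ := (inferInstance : Nonempty V)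
    exact ⟨cutValue ends x {v}, {v}, Finset.singleton_nonempty v, rfl⟩
  have hbdd : BddBelow S := by
    have hfin : S.Finite := by
      have hsub : S ⊆ Set.range (fun A : Finset V => cutValue ends x A) := by
        rintro q ⟨A, _, rfl⟩; exact ⟨A, rfl⟩
      exact (Set.finite_range _).subset hsub
    exact hfin.bddBelow
  have hmap := (OrderIso.addRight (-(∑ e : E, x e) - 1)).map_csInf' hne hbdd
  simp only [OrderIso.addRight_apply] at hmap
  rw [hSeq, ← hmap]
  ring
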